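/- Define T(n,m) for m ≥ 2 as the sum ∑ C_{r_1}·…·C_{r_m} over all m-tuples (r_1,…,r_m) of nonnegative integers with r_1 ≥ 1, r_m ≥ 1 and r_1+⋯+r_m = n−m+2, and set T(n,1) := C_{n+1} − C_n. Then for every m ≥ 3 and every integer n > m, the recurrence T(n,m) = T(n,m−1) − T(n−1,m−2) holds. -/

import Mathlib

open Finset Finset.Nat PowerSeries

/-- `T n m` (m ≥ 2) = ∑ C_{r₁}⋯C_{r_m} over m-tuples of nonnegative integers with
r₁ ≥ 1, r_m ≥ 1 and r₁+⋯+r_m = n−m+2. -/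
def Tcount (n m : ℕ) : ℕ :=
  ∑ r ∈ (Finset.Nat.antidiagonalTuple m (n - m + 2)).filter
      (fun r => ∀ i : Fin m, ((i : ℕ) = 0 ∨ (i : ℕ) = m - 1) → 1 ≤ r i),
    ∏ i, catalan (r i)

/-- `T n m` extended by the convention T(n,1) := C_{n+1} − C_n. -/
def Tz (n m : ℕ) : ℤ :=
  if m = 1 then (catalan (n + 1) : ℤ) - catalan n else (Tcount n m : ℤ)

section Aux

/-- Decomposition of a sum over `antidiagonalTuple (k+1) n`. -/
lemma sum_adT_succ {M : Type*} [AddCommMonoid M] (k n : ℕ) (f : (Fin (k + 1) → ℕ) → M) :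
    ∑ r ∈ antidiagonalTuple (k + 1) n, f r
      = ∑ ab ∈ Finset.HasAntidiagonal.antidiagonal n, ∑ x ∈ antidiagonalTuple k ab.2, f (Fin.cons ab.1 x) := by
  have hsig : (∑ ab ∈ Finset.HasAntidiagonal.antidiagonal n, ∑ x ∈ antidiagonalTuple k ab.2, f (Fin.cons ab.1 x))
      = ∑ p ∈ (Finset.HasAntidiagonal.antidiagonal n).sigma (fun ab => antidiagonalTuple k ab.2),
          f (Fin.cons p.1.1 p.2) :=
    (Finset.sum_sigma (Finset.HasAntidiagonal.antidiagonal n) (fun ab => antidiagonalTuple k ab.2)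
      (fun p => f (Fin.cons p.1.1 p.2))).symm
  rw [hsig]
  refine Finset.sum_nbij'
    (fun r => (⟨(r 0, ∑ i, Fin.tail r i), Fin.tail r⟩ : Σ _ : ℕ × ℕ, Fin k → ℕ))
    (fun p => Fin.cons p.1.1 p.2) ?_ ?_ ?_ ?_ ?_
  · intro r hr
    rw [Finset.Nat.mem_antidiagonalTuple] at hr
    simp only [Finset.mem_sigma, Finset.Nat.mem_antidiagonalTuple, Finset.HasAntidiagonal.mem_antidiagonal]
    refine ⟨?_, trivial⟩
    rw [← hr, Fin.sum_univ_succ]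
    rfl
  · intro p hp
    simp only [Finset.mem_sigma, Finset.Nat.mem_antidiagonalTuple, Finset.HasAntidiagonal.mem_antidiagonal] at hp
    rw [Finset.Nat.mem_antidiagonalTuple, Fin.sum_univ_succ]
    simp only [Fin.cons_zero, Fin.cons_succ]
    rw [hp.2, hp.1]
  · intro r _
    exact Fin.cons_self_tail r
  · intro p hp
    simp only [Finset.mem_sigma, Finset.Nat.mem_antidiagonalTuple, Finset.HasAntidiagonal.mem_antidiagonal] at hp
    obtain ⟨⟨a, b⟩, x⟩ := p
    simp only at hp
    have hb : ∑ i, x i = b := hp.2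
    simp [Fin.cons_zero, Fin.tail_cons, hb]
  · intro r _
    rw [Fin.cons_self_tail]

/-- The Catalan generating function, as an integer power series. -/
noncomputable def Cs : PowerSeries ℤ := PowerSeries.mk fun n => (catalan n : ℤ)

/-- `Cs - 1`. -/
noncomputable def Ds : PowerSeries ℤ := PowerSeries.mk fun n => if n = 0 then 0 else (catalan n : ℤ)

lemma Ds_eq : Ds = Cs - 1 := by
  ext n
  simp only [Ds, Cs, coeff_mk, map_sub, coeff_one]
  rcases n with _ | n <;> simp

lemma hXC : X * Cs ^ 2 = Cs - 1 := by
  ext n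
  rcases n with _ | n
  · simp [Cs, coeff_mk]
  · rw [coeff_succ_X_mul, sq, coeff_mul, map_sub]
    simp only [Cs, coeff_mk, coeff_one, Nat.succ_ne_zero, if_false, sub_zero]
    rw [catalan_succ']
    push_cast
    rfl

lemma Cs_ne_zero : Cs ≠ 0 := by
  intro h
  have := congrArg (PowerSeries.coeff 0) h
  simp [Cs, coeff_mk] at this

lemma coeff_pow_mul_Ds (k N : ℕ) :
    PowerSeries.coeff N (Cs ^ k * Ds)
      = ∑ x ∈ antidiagonalTuple (k + 1) N,
          if 1 ≤ x (Fin.last k) then ∏ i, (catalan (x i) : ℤ) else 0 := by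
  induction k generalizing N with
  | zero =>
    rw [antidiagonalTuple_one, Finset.sum_singleton, pow_zero, one_mul]
    simp only [Ds, coeff_mk, show (![N] : Fin 1 → ℕ) (Fin.last 0) = N from rfl]
    by_cases h : N = 0
    · simp [h]
    · rw [if_neg h, if_pos (by omega)]
      simp [Fin.prod_univ_succ]
  | succ k ih =>
    rw [sum_adT_succ (k + 1) N]
    rw [show Cs ^ (k + 1) * Ds = Cs * (Cs ^ k * Ds) by ring, coeff_mul]
    refine Finset.sum_congr rfl fun ab hab => ?_
    rw [show PowerSeries.coeff ab.1 Cs = (catalan ab.1 : ℤ) from by simp [Cs, coeff_mk],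
      ih ab.2, Finset.mul_sum]
    refine Finset.sum_congr rfl fun x hx => ?_
    rw [show (Fin.cons ab.1 x : Fin (k + 2) → ℕ) (Fin.last (k + 1)) = x (Fin.last k) by
      rw [← Fin.succ_last, Fin.cons_succ]]
    split
    · simp [Fin.prod_univ_succ]
    · rw [mul_zero]

lemma Tcount_eq (n k : ℕ) :
    (Tcount n (k + 2) : ℤ)
      = PowerSeries.coeff (n - (k + 2) + 2) (Ds * (Cs ^ k * Ds)) := by
  rw [coeff_mul, Tcount, Finset.sum_filter]
  push_cast
  rw [sum_adT_succ (k + 1)]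
  refine Finset.sum_congr rfl fun ab hab => ?_
  rw [show PowerSeries.coeff ab.1 Ds = (if ab.1 = 0 then 0 else (catalan ab.1 : ℤ)) from by
    simp [Ds, coeff_mk], coeff_pow_mul_Ds, Finset.mul_sum]
  refine Finset.sum_congr rfl fun x hx => ?_
  have hcond : (∀ i : Fin (k + 2), ((i : ℕ) = 0 ∨ (i : ℕ) = k + 1)
        → 1 ≤ (Fin.cons ab.1 x : Fin (k + 2) → ℕ) i)
      ↔ (¬ ab.1 = 0 ∧ 1 ≤ x (Fin.last k)) := by
    constructor
    · intro h
      constructor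
      · have h0 := h 0 (Or.inl rfl)
        rw [Fin.cons_zero] at h0
        omega
      · have hl := h (Fin.last (k + 1)) (Or.inr (by simp))
        rwa [← Fin.succ_last, Fin.cons_succ] at hl
    · rintro ⟨h1, h2⟩ i hi
      rcases hi with hi | hi
      · have hi0 : i = 0 := Fin.ext hi
        rw [hi0, Fin.cons_zero]
        omega
      · have hil : i = Fin.last (k + 1) := Fin.ext (by simpa using hi)
        rw [hil, ← Fin.succ_last, Fin.cons_succ]
        exact h2
  simp only [hcond]
  by_cases h1 : ab.1 = 0
  · simp [h1]
  · by_cases h2 : 1 ≤ x (Fin.last k)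
    · simp [h1, h2, Fin.prod_univ_succ]
    · simp [h1, h2]

end Aux

/-- For every m ≥ 3 and n > m, T(n,m) = T(n,m−1) − T(n−1,m−2). -/
theorem stmt_13 (m n : ℕ) (hm : 3 ≤ m) (hn : m < n) :
    Tz n m = Tz n (m - 1) - Tz (n - 1) (m - 2) := by
  rcases Nat.lt_or_ge m 4 with h4 | h4
  · -- the case m = 3
    have hm3 : m = 3 := by omega
    subst hm3
    obtain ⟨j, rfl⟩ : ∃ j, n = j + 4 := ⟨n - 4, by omega⟩
    have e1 : Tz (j + 4) 3 = PowerSeries.coeff (j + 3) (Ds * (Cs ^ 1 * Ds)) := by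
      have h := Tcount_eq (j + 4) 1
      rw [show j + 4 - (1 + 2) + 2 = j + 3 from by omega] at h
      rw [Tz, if_neg (by norm_num)]
      exact h
    have e2 : Tz (j + 4) 2 = PowerSeries.coeff (j + 4) (Ds * (Cs ^ 0 * Ds)) := by
      have h := Tcount_eq (j + 4) 0
      rw [show j + 4 - (0 + 2) + 2 = j + 4 from by omega] at h
      rw [Tz, if_neg (by norm_num)]
      exact h
    have e3 : Tz (j + 4 - 1) 1 = PowerSeries.coeff (j + 4) (Ds - X * Cs) := by
      rw [Tz, if_pos rfl, map_sub]
      rw [show j + 4 = (j + 3) + 1 from rfl, coeff_succ_X_mul]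
      rw [show j + 4 - 1 = j + 3 from rfl]
      simp [Ds, Cs, coeff_mk]
    have key : Ds * (Cs ^ 0 * Ds) - X * (Ds * (Cs ^ 1 * Ds)) = Ds - X * Cs := by
      apply mul_left_cancel₀ Cs_ne_zero
      rw [Ds_eq]
      linear_combination (Cs * (2 - Cs)) * hXC
    have hx : PowerSeries.coeff (j + 4) (X * (Ds * (Cs ^ 1 * Ds)))
        = PowerSeries.coeff (j + 3) (Ds * (Cs ^ 1 * Ds)) := by
      rw [show j + 4 = (j + 3) + 1 from rfl, coeff_succ_X_mul]
    rw [e1, e2, e3, ← key, map_sub, hx]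
    ring
  · -- the case m ≥ 4
    obtain ⟨k, rfl⟩ : ∃ k, m = k + 4 := ⟨m - 4, by omega⟩
    obtain ⟨j, rfl⟩ : ∃ j, n = k + 5 + j := ⟨n - (k + 5), by omega⟩
    have e1 : Tz (k + 5 + j) (k + 4)
        = PowerSeries.coeff (j + 3) (Ds * (Cs ^ (k + 2) * Ds)) := by
      have h := Tcount_eq (k + 5 + j) (k + 2)
      rw [show k + 5 + j - (k + 2 + 2) + 2 = j + 3 from by omega] at h
      rw [Tz, if_neg (by omega)]
      exact h
    have e2 : Tz (k + 5 + j) (k + 4 - 1)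
        = PowerSeries.coeff (j + 4) (Ds * (Cs ^ (k + 1) * Ds)) := by
      have h := Tcount_eq (k + 5 + j) (k + 1)
      rw [show k + 5 + j - (k + 1 + 2) + 2 = j + 4 from by omega] at h
      rw [show k + 4 - 1 = k + 1 + 2 from by omega, Tz, if_neg (by omega)]
      exact h
    have e3 : Tz (k + 5 + j - 1) (k + 4 - 2)
        = PowerSeries.coeff (j + 4) (Ds * (Cs ^ k * Ds)) := by
      have h := Tcount_eq (k + 5 + j - 1) k
      rw [show k + 5 + j - 1 - (k + 2) + 2 = j + 4 from by omega] at h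
      rw [show k + 4 - 2 = k + 2 from by omega, Tz, if_neg (by omega)]
      exact h
    have key : Ds * (Cs ^ (k + 1) * Ds) - Ds * (Cs ^ k * Ds)
        = X * (Ds * (Cs ^ (k + 2) * Ds)) := by
      rw [Ds_eq]
      linear_combination (-(Cs - 1) ^ 2 * Cs ^ k) * hXC
    rw [e1, e2, e3, ← map_sub, key, show j + 4 = (j + 3) + 1 from rfl, coeff_succ_X_mul]
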